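/- Let μ be a measure on ℝ^n, φ a Young function, and T a sub-additive operator on measurable functions (i.e. |T(f+g)| ≤ |Tf| + |Tg| pointwise). Assume there are positive constants C, c with μ({x : |Tf(x)| > t}) ≤ C ∫_{ℝ^n} φ(c|f(x)|/t) dμ(x) for every measurable f and every t > 0, and that ‖Tf‖_{L^∞(μ)} ≤ C₀ ‖f‖_{L^∞(μ)} for some C₀ > 0 and every f. Then for every measurable f and every t > 0, μ({x : |Tf(x)| > t}) ≤ C ∫_{{x : |f(x)| > t/(2C₀)}} φ(2c|f(x)|/t) dμ(x). -/

import Mathlib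

open MeasureTheory ENNReal Set

noncomputable section

/-- The axis-parallel half-open cube with corner `a` and side length `h`. -/
def cube (n : ℕ) (a : Fin n → ℝ) (h : ℝ) : Set (Fin n → ℝ) :=
  {x | ∀ i, a i ≤ x i ∧ x i < a i + h}

/-- A cube in `ℝ^n` with sides parallel to the coordinate axes. -/
def IsCube {n : ℕ} (Q : Set (Fin n → ℝ)) : Prop :=
  ∃ a h, 0 < h ∧ Q = cube n a h

/-- A Young function: convex, increasing on `[0,∞)`, vanishing at `0`, tending to `∞`. -/
def IsYoung (φ : ℝ → ℝ) : Prop :=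
  ConvexOn ℝ (Ici 0) φ ∧ MonotoneOn φ (Ici 0) ∧ φ 0 = 0 ∧
    Filter.Tendsto φ Filter.atTop Filter.atTop

/-- The Luxemburg average `‖f‖_{φ,Q}`. -/
def luxNorm {n : ℕ} (φ : ℝ → ℝ) (f : (Fin n → ℝ) → ℝ) (Q : Set (Fin n → ℝ)) : ℝ :=
  sInf {l : ℝ | 0 < l ∧ ∫ y in Q, φ (|f y| / l) ≤ (volume Q).toReal}

/-- The generalized maximal operator `M_φ f`. -/
def maximalOp {n : ℕ} (φ : ℝ → ℝ) (f : (Fin n → ℝ) → ℝ) (x : Fin n → ℝ) : ℝ≥0∞ :=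
  ⨆ (Q : Set (Fin n → ℝ)) (_ : IsCube Q ∧ x ∈ Q), ENNReal.ofReal (luxNorm φ f Q)

/-- The generalized fractional maximal operator `M_{γ,φ} f`. -/
def fracMaximalOp {n : ℕ} (γ : ℝ) (φ : ℝ → ℝ) (f : (Fin n → ℝ) → ℝ) (x : Fin n → ℝ) : ℝ≥0∞ :=
  ⨆ (Q : Set (Fin n → ℝ)) (_ : IsCube Q ∧ x ∈ Q),
    (volume Q) ^ (γ / (n : ℝ)) * ENNReal.ofReal (luxNorm φ f Q)

/-- A weight: locally integrable, positive (and finite) a.e. -/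
def IsWeight {n : ℕ} (w : (Fin n → ℝ) → ℝ) : Prop :=
  LocallyIntegrable w volume ∧ ∀ᵐ x ∂(volume : Measure (Fin n → ℝ)), 0 < w x

/-- The Muckenhoupt `A₁` class. -/
def MuckenhouptA1 {n : ℕ} (w : (Fin n → ℝ) → ℝ) : Prop :=
  IsWeight w ∧ ∃ C > 0, ∀ Q : Set (Fin n → ℝ), IsCube Q →
    ∫ x in Q, w x ≤ C * essInf w (volume.restrict Q) * (volume Q).toReal

/-- The Muckenhoupt `A_∞` class, via the `∫_E w ≤ C (|E|/|Q|)^ε ∫_Q w` characterization. -/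
def MuckenhouptAinfty {n : ℕ} (w : (Fin n → ℝ) → ℝ) : Prop :=
  IsWeight w ∧ ∃ C > 0, ∃ ε > 0, ∀ Q : Set (Fin n → ℝ), IsCube Q →
    ∀ E ⊆ Q, MeasurableSet E →
      ∫ x in E, w x ≤ C * ((volume E).toReal / (volume Q).toReal) ^ ε * ∫ x in Q, w x

/-- The reverse Hölder class `RH_s`. -/
def MemRH {n : ℕ} (s : ℝ) (w : (Fin n → ℝ) → ℝ) : Prop :=
  IsWeight w ∧ ∃ C > 0, ∀ Q : Set (Fin n → ℝ), IsCube Q →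
    ((∫ x in Q, w x ^ s) / (volume Q).toReal) ^ (1 / s) ≤
      C * ((∫ x in Q, w x) / (volume Q).toReal)

/-- A submultiplicative function: `φ(st) ≤ C φ(s) φ(t)`. -/
def Submultiplicative (φ : ℝ → ℝ) : Prop :=
  ∃ C > 0, ∀ s t : ℝ, 0 ≤ s → 0 ≤ t → φ (s * t) ≤ C * φ s * φ t

/-- `φ` has lower type `r`: `φ(st) ≤ C s^r φ(t)` for `0 < s ≤ 1`, `t > 0`. -/
def HasLowerType (r : ℝ) (φ : ℝ → ℝ) : Prop :=
  ∃ C > 0, ∀ s t : ℝ, 0 < s → s ≤ 1 → 0 < t → φ (s * t) ≤ C * s ^ r * φ t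

/-- The family `𝔉_r` of Young functions. -/
def MemFr (r : ℝ) (φ : ℝ → ℝ) : Prop :=
  IsYoung φ ∧ Submultiplicative φ ∧ HasLowerType r φ ∧
    ∃ C₀ > 0, ∃ δ : ℝ, 0 ≤ δ ∧ ∃ tstar : ℝ, 1 ≤ tstar ∧
      ∀ t : ℝ, tstar ≤ t → φ t ≤ C₀ * (Real.log t) ^ δ * t ^ r

/-- `log⁺ t = max {0, log t}`. -/
def logPlus (t : ℝ) : ℝ := max 0 (Real.log t)

/-- A dyadic grid in `ℝ^n`. -/
def IsDyadicGrid {n : ℕ} (D : Set (Set (Fin n → ℝ))) : Prop :=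
  (∀ Q ∈ D, ∃ (a : Fin n → ℝ) (k : ℤ), Q = cube n a ((2 : ℝ) ^ k)) ∧
  (∀ Q ∈ D, ∀ P ∈ D, (Q ∩ P).Nonempty → Q ⊆ P ∨ P ⊆ Q) ∧
  (∀ k : ℤ, ⋃₀ {Q | Q ∈ D ∧ ∃ a, Q = cube n a ((2 : ℝ) ^ k)} = univ)

/-- The dyadic maximal operator `M_{φ,𝒟} f`. -/
def dyadicMaximalOp {n : ℕ} (D : Set (Set (Fin n → ℝ))) (φ : ℝ → ℝ)
    (f : (Fin n → ℝ) → ℝ) (x : Fin n → ℝ) : ℝ≥0∞ :=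
  ⨆ (Q : Set (Fin n → ℝ)) (_ : Q ∈ D ∧ x ∈ Q), ENNReal.ofReal (luxNorm φ f Q)

/-- The generalized inverse `φ⁻¹(t) = inf {s ≥ 0 : φ(s) ≥ t}`, with `inf ∅ = ∞`. -/
def genInv (φ : ℝ → ℝ) (t : ℝ) : ℝ≥0∞ :=
  ⨅ (s : ℝ) (_ : 0 ≤ s ∧ t ≤ φ s), ENNReal.ofReal s

end

/-- Restriction of the domain of integration in a modular weak type inequality for a
sub-additive operator which is bounded on `L^∞(μ)`. -/
theorem modular_weak_type_restricted {n : ℕ} (μ : Measure (Fin n → ℝ))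
    (φ : ℝ → ℝ) (hφ : IsYoung φ)
    (T : ((Fin n → ℝ) → ℝ) → ((Fin n → ℝ) → ℝ))
    (hsub : ∀ f g : (Fin n → ℝ) → ℝ, ∀ x, |T (f + g) x| ≤ |T f x| + |T g x|)
    (C c C₀ : ℝ) (hC : 0 < C) (hc : 0 < c) (hC₀ : 0 < C₀)
    (hweak : ∀ f : (Fin n → ℝ) → ℝ, Measurable f → ∀ t : ℝ, 0 < t →
      μ {x | t < |T f x|} ≤
        ENNReal.ofReal C * ∫⁻ x, ENNReal.ofReal (φ (c * |f x| / t)) ∂μ)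
    (hinfty : ∀ f : (Fin n → ℝ) → ℝ, eLpNorm (T f) ⊤ μ ≤ ENNReal.ofReal C₀ * eLpNorm f ⊤ μ) :
    ∀ f : (Fin n → ℝ) → ℝ, Measurable f → ∀ t : ℝ, 0 < t →
      μ {x | t < |T f x|} ≤
        ENNReal.ofReal C * ∫⁻ x in {x | t / (2 * C₀) < |f x|},
          ENNReal.ofReal (φ (2 * c * |f x| / t)) ∂μ := by

  intro f hf t ht
  set S : Set (Fin n → ℝ) := {x | t / (2 * C₀) < |f x|} with hS
  have hSmeas : MeasurableSet S := measurableSet_lt measurable_const hf.abs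
  set f₁ : (Fin n → ℝ) → ℝ := S.indicator f with hf₁def
  set f₂ : (Fin n → ℝ) → ℝ := Sᶜ.indicator f with hf₂def
  have hf₁ : Measurable f₁ := hf.indicator hSmeas
  have hsplit : f = f₁ + f₂ := by
    funext x
    by_cases hx : x ∈ S
    · simp [hf₁def, hf₂def, Set.indicator_of_mem hx,
        Set.indicator_of_notMem (by simpa using hx : x ∉ Sᶜ)]
    · simp [hf₁def, hf₂def, Set.indicator_of_notMem hx,
        Set.indicator_of_mem (Set.mem_compl hx)]
  -- f₂ bounded by t/(2C₀)
  have hf₂bdd : ∀ x, |f₂ x| ≤ t / (2 * C₀) := by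
    intro x
    by_cases hx : x ∈ Sᶜ
    · rw [hf₂def, Set.indicator_of_mem hx]
      have : ¬ t / (2 * C₀) < |f x| := hx
      linarith [not_lt.mp this]
    · rw [hf₂def, Set.indicator_of_notMem hx]
      simp
      positivity
  have hf₂norm : eLpNorm f₂ ⊤ μ ≤ ENNReal.ofReal (t / (2 * C₀)) := by
    rw [eLpNorm_exponent_top]
    refine eLpNormEssSup_le_of_ae_bound (C := t / (2 * C₀)) ?_
    exact Filter.Eventually.of_forall (fun x => by simpa using hf₂bdd x)
  have hTf₂ : eLpNorm (T f₂) ⊤ μ ≤ ENNReal.ofReal (t / 2) := by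
    calc eLpNorm (T f₂) ⊤ μ ≤ ENNReal.ofReal C₀ * eLpNorm f₂ ⊤ μ := hinfty f₂
    _ ≤ ENNReal.ofReal C₀ * ENNReal.ofReal (t / (2 * C₀)) := by gcongr
    _ = ENNReal.ofReal (t / 2) := by
        rw [← ENNReal.ofReal_mul hC₀.le]
        congr 1
        field_simp
  have hnull : μ {x | t / 2 < |T f₂ x|} = 0 := by
    have hae : ∀ᵐ x ∂μ, (‖T f₂ x‖₊ : ℝ≥0∞) ≤ eLpNormEssSup (T f₂) μ :=
      ae_le_eLpNormEssSup
    rw [← eLpNorm_exponent_top] at hae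
    have : ∀ᵐ x ∂μ, ¬ (t / 2 < |T f₂ x|) := by
      filter_upwards [hae] with x hx
      have hx2 : (‖T f₂ x‖₊ : ℝ≥0∞) ≤ ENNReal.ofReal (t / 2) := hx.trans hTf₂
      intro hlt
      have h1 : ENNReal.ofReal (t / 2) < (‖T f₂ x‖₊ : ℝ≥0∞) := by
        rw [← enorm_eq_nnnorm, Real.enorm_eq_ofReal_abs]
        exact (ENNReal.ofReal_lt_ofReal_iff (lt_trans (by linarith) hlt)).mpr hlt
      exact absurd hx2 (not_le.mpr h1)
    simpa [ae_iff] using this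
  have hsubset : {x | t < |T f x|} ⊆ {x | t / 2 < |T f₁ x|} ∪ {x | t / 2 < |T f₂ x|} := by
    intro x hx
    have hxx : t < |T f x| := hx
    by_contra hcon
    rw [Set.mem_union] at hcon
    push_neg at hcon
    simp only [Set.mem_setOf_eq, not_lt] at hcon
    obtain ⟨h1', h2'⟩ := hcon
    have := hsub f₁ f₂ x
    rw [← hsplit] at this
    linarith
  have hstep : μ {x | t < |T f x|} ≤ μ {x | t / 2 < |T f₁ x|} := by
    calc μ {x | t < |T f x|} ≤ μ ({x | t / 2 < |T f₁ x|} ∪ {x | t / 2 < |T f₂ x|}) :=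
          measure_mono hsubset
    _ ≤ μ {x | t / 2 < |T f₁ x|} + μ {x | t / 2 < |T f₂ x|} := measure_union_le _ _
    _ = μ {x | t / 2 < |T f₁ x|} := by rw [hnull, add_zero]
  have ht2 : (0 : ℝ) < t / 2 := by linarith
  have hmain := hweak f₁ hf₁ (t / 2) ht2
  refine hstep.trans (hmain.trans (le_of_eq ?_))
  have : ∀ x, ENNReal.ofReal (φ (c * |f₁ x| / (t / 2))) =
      S.indicator (fun x => ENNReal.ofReal (φ (2 * c * |f x| / t))) x := by
    intro x
    by_cases hx : x ∈ S
    · rw [Set.indicator_of_mem hx, hf₁def, Set.indicator_of_mem hx]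
      congr 2
      field_simp
    · rw [Set.indicator_of_notMem hx, hf₁def, Set.indicator_of_notMem hx]
      simp [hφ.2.2.1]
  rw [funext this, lintegral_indicator hSmeas]
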